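/- There is no finite set P of datalog rules over the signature {E, G, B} (E binary; G, B unary) such that T ⊨ P and P ⊨ R, where T is the theory {∀x. G(x)∨B(x); ∀x₁x₀. E(x₁,x₀)∧G(x₀)→B(x₁); ∀x₁x₀. E(x₁,x₀)∧B(x₀)→G(x₁)} and R is the infinite set of rules E(xₙ,x₀) ∧ E(xₙ,xₙ₋₁) ∧ … ∧ E(x₁,x₀) → G(xₙ) for every positive even n. -/

import Mathlib

/-- Function-free atoms over the signature `{E, G, B}` with variables `ℕ`. -/
inductive EGBAtom : Type
  | E : ℕ → ℕ → EGBAtom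
  | G : ℕ → EGBAtom
  | B : ℕ → EGBAtom
deriving DecidableEq

/-- A datalog rule: a universally quantified implication from a conjunction of atoms
(the body) to a single atom (the head). -/
structure DRule : Type where
  body : List EGBAtom
  head : EGBAtom
deriving DecidableEq

/-- Evaluation of an atom in an interpretation under a variable assignment. -/
def evalA {D : Type} (GI BI : D → Prop) (EI : D → D → Prop) (env : ℕ → D) : EGBAtom → Prop
  | .E i j => EI (env i) (env j)
  | .G i => GI (env i)
  | .B i => BI (env i)

/-- Satisfaction of a datalog rule in an interpretation. -/
def satRule {D : Type} (GI BI : D → Prop) (EI : D → D → Prop) (r : DRule) : Prop :=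
  ∀ env : ℕ → D, (∀ a ∈ r.body, evalA GI BI EI env a) → evalA GI BI EI env r.head

/-- Models of the theory `T = {∀x. G(x)∨B(x); ∀x₁x₀. E(x₁,x₀)∧G(x₀)→B(x₁);
∀x₁x₀. E(x₁,x₀)∧B(x₀)→G(x₁)}`. -/
def Tmod {D : Type} (GI BI : D → Prop) (EI : D → D → Prop) : Prop :=
  (∀ x, GI x ∨ BI x) ∧
  (∀ x1 x0, EI x1 x0 → GI x0 → BI x1) ∧
  (∀ x1 x0, EI x1 x0 → BI x0 → GI x1)

/-- The rule `E(xₙ,x₀) ∧ E(xₙ,xₙ₋₁) ∧ … ∧ E(x₁,x₀) → G(xₙ)`. -/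
def Rrule (n : ℕ) : DRule :=
  ⟨EGBAtom.E n 0 :: (List.range n).map (fun i => EGBAtom.E (i + 1) i), EGBAtom.G n⟩

/-- there is no finite set `P` of datalog rules over `{E,G,B}` with
`T ⊨ P` and `P ⊨ R`, where `R` consists of the rules `Rrule n` for all positive even `n`. -/
theorem no_finite_datalog_interpolant :
    ¬ ∃ P : Finset DRule,
      (∀ r ∈ P, ∀ (D : Type) (GI BI : D → Prop) (EI : D → D → Prop),
        Tmod GI BI EI → satRule GI BI EI r) ∧
      (∀ n : ℕ, 0 < n → Even n →
        ∀ (D : Type) (GI BI : D → Prop) (EI : D → D → Prop),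
          (∀ r ∈ P, satRule GI BI EI r) → satRule GI BI EI (Rrule n)) := by
  rintro ⟨P, hT, hR⟩
  classical
  set m := P.sup (fun r => r.body.length) with hm
  set n := 2 * (m + 1) with hn
  have hn2 : 2 ≤ n := by omega
  -- the cycle-plus-chord edge relation
  set EI0 : ℕ → ℕ → Prop := fun x y => (x = n ∧ y = 0) ∨ (x = y + 1 ∧ x ≤ n) with hEI0
  -- every rule of P holds in the structure with empty G, B and edges EI0
  have hP0 : ∀ r ∈ P, satRule (fun _ => False) (fun _ => False) EI0 r := by
    intro r hr env hbody
    have hEshape : ∀ a ∈ r.body, ∃ i j, a = EGBAtom.E i j ∧ EI0 (env i) (env j) := by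
      intro a ha
      have h := hbody a ha
      cases a with
      | E i j => exact ⟨i, j, rfl, h⟩
      | G i => exact absurd h (by simp [evalA])
      | B i => exact absurd h (by simp [evalA])
    -- pigeonhole: some edge index k ≤ n is unused by the body
    set idx : EGBAtom → ℕ := fun a => match a with
      | .E i j => if env i = env j + 1 then env i else 0
      | _ => 0 with hidx
    set F : Finset ℕ := (r.body.map idx).toFinset with hF
    have hFcard : F.card ≤ m := by
      calc F.card ≤ (r.body.map idx).length := List.toFinset_card_le _
        _ = r.body.length := List.length_map _
        _ ≤ m := Finset.le_sup (f := fun r => r.body.length) hr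
    obtain ⟨k, hkn, hkF⟩ : ∃ k, k ≤ n ∧ k ∉ F := by
      by_contra hc
      push_neg at hc
      have hsub : Finset.range (n + 1) ⊆ F := by
        intro x hx
        exact hc x (Nat.lt_succ_iff.mp (Finset.mem_range.mp hx))
      have := Finset.card_le_card hsub
      simp [Finset.card_range] at this
      omega
    -- the edge relation with edge k removed
    set EI' : ℕ → ℕ → Prop := fun x y =>
      (x = n ∧ y = 0 ∧ k ≠ 0) ∨ (x = y + 1 ∧ x ≤ n ∧ x ≠ k) with hEI'
    -- a proper 2-coloring of the graph minus edge k
    set col : ℕ → Prop := fun v =>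
      if k = 0 ∨ v < k then v % 2 = 1 else (n - v + 1) % 2 = 1 with hcol
    have flip : ∀ x1 x0, EI' x1 x0 → (col x1 ↔ ¬ col x0) := by
      rintro x1 x0 (⟨rfl, rfl, hk0⟩ | ⟨rfl, hle, hne⟩) <;>
        simp only [hcol] <;> split_ifs <;> first | omega | (simp; omega) | simp
    have tmod1 : Tmod col (fun v => ¬ col v) EI' :=
      ⟨fun x => Classical.em _,
       fun x1 x0 he hg h1 => ((flip x1 x0 he).mp h1) hg,
       fun x1 x0 he hb => (flip x1 x0 he).mpr hb⟩
    have tmod2 : Tmod (fun v => ¬ col v) col EI' :=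
      ⟨fun x => (Classical.em _).symm,
       fun x1 x0 he hg => (flip x1 x0 he).mpr hg,
       fun x1 x0 he hb h1 => ((flip x1 x0 he).mp h1) hb⟩
    -- the body holds in the reduced structure
    have hbody' : ∀ GI BI : ℕ → Prop, ∀ a ∈ r.body, evalA GI BI EI' env a := by
      intro GI BI a ha
      obtain ⟨i, j, rfl, hij⟩ := hEshape a ha
      have hmem : idx (EGBAtom.E i j) ∈ F := by
        rw [hF, List.mem_toFinset]
        exact List.mem_map_of_mem (f := idx) ha
      show EI' (env i) (env j)
      rcases hij with ⟨h1, h2⟩ | ⟨h1, h2⟩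
      · left
        refine ⟨h1, h2, ?_⟩
        have : idx (EGBAtom.E i j) = 0 := by
          simp only [hidx]
          rw [if_neg]; omega
        rw [this] at hmem
        intro h; exact hkF (h ▸ hmem)
      · right
        refine ⟨h1, h2, ?_⟩
        have : idx (EGBAtom.E i j) = env i := by
          simp only [hidx]
          rw [if_pos h1]
        rw [this] at hmem
        intro h; exact hkF (h ▸ hmem)
    have h1 := hT r hr ℕ col (fun v => ¬ col v) EI' tmod1 env (hbody' _ _)
    have h2 := hT r hr ℕ (fun v => ¬ col v) col EI' tmod2 env (hbody' _ _)
    cases hh : r.head with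
    | E i j =>
      rw [hh] at h1
      have : EI' (env i) (env j) := h1
      show EI0 (env i) (env j)
      rcases this with ⟨a, b, _⟩ | ⟨a, b, _⟩
      · exact Or.inl ⟨a, b⟩
      · exact Or.inr ⟨a, b⟩
    | G i =>
      rw [hh] at h1 h2
      exact absurd (h1 : col (env i)) (h2 : ¬ col (env i))
    | B i =>
      rw [hh] at h1 h2
      exact absurd (h2 : col (env i)) (h1 : ¬ col (env i))
  -- apply the assumed entailment of Rrule n
  have hRn := hR n (by omega) ⟨m + 1, by omega⟩ ℕ (fun _ => False) (fun _ => False) EI0 hP0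
  have hbodyR : ∀ a ∈ (Rrule n).body,
      evalA (fun _ => False) (fun _ => False) EI0 (fun i => i) a := by
    intro a ha
    simp only [Rrule, List.mem_cons, List.mem_map, List.mem_range] at ha
    rcases ha with h | ⟨i, hi, rfl⟩
    · subst h
      exact Or.inl ⟨rfl, rfl⟩
    · refine Or.inr ⟨rfl, ?_⟩
      show i + 1 ≤ n
      omega
  exact hRn (fun i => i) hbodyR
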